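/- Let X ⊆ ℙ²_k be a finite set of n points where n = C(d+2,2) + h with 0 ≤ h ≤ d+1, in uniform position, and let g be the least degree of a curve containing X. If either g ≤ d, or g = d+1 and h ≥ 2, then every curve of degree g containing X is irreducible. -/

import Mathlib

open MvPolynomial

/-- Evaluation of degree-`l` homogeneous forms on `ℙ²` (given by representatives in `k³`)
at the points of a finite set `X`. -/
noncomputable def evalMapP2 (k : Type) [Field k] (X : Finset (Fin 3 → k)) (l : ℕ) :
    (homogeneousSubmodule (Fin 3) k l) →ₗ[k] (X → k) where
  toFun f x := eval (x : Fin 3 → k) f.1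
  map_add' f g := by funext x; simp
  map_smul' c f := by funext x; simp

/-- The Hilbert function of a finite set of points of `ℙ²` (given by representatives in `k³`):
`H(X, l)` is the rank of the evaluation map `H⁰(𝒪_{ℙ²}(l)) → H⁰(𝒪_X(l)) = k^X`. -/
noncomputable def hilbertFunction (k : Type) [Field k] (X : Finset (Fin 3 → k)) (l : ℕ) : ℕ :=
  Module.finrank k (LinearMap.range (evalMapP2 k X l))

/-- `h⁰(ℙ², I_X(l))`: the dimension of the space of degree-`l` forms vanishing on `X`. -/
noncomputable def h0IdealSheaf (k : Type) [Field k] (X : Finset (Fin 3 → k)) (l : ℕ) : ℕ :=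
  Module.finrank k (LinearMap.ker (evalMapP2 k X l))

/-- `h¹(ℙ², I_X(l)) = deg X - H(X, l)`, from the exact sequence
`0 → H⁰(I_X(l)) → H⁰(𝒪(l)) → H⁰(𝒪_X(l)) → H¹(I_X(l)) → H¹(𝒪(l)) = 0`. -/
noncomputable def h1IdealSheaf (k : Type) [Field k] (X : Finset (Fin 3 → k)) (l : ℕ) : ℕ :=
  X.card - hilbertFunction k X l

/-- The representatives in `X ⊆ k³` give pairwise distinct points of `ℙ²`. -/
def ProjDistinct (k : Type) [Field k] (X : Finset (Fin 3 → k)) : Prop :=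
  (∀ x ∈ X, x ≠ 0) ∧ ∀ x ∈ X, ∀ y ∈ X, x ≠ y → ∀ c : k, x ≠ c • y

/-- `X` has the Uniform Position Property: any two subsets of the same cardinality
have the same Hilbert function. -/
def UniformPosition (k : Type) [Field k] (X : Finset (Fin 3 → k)) : Prop :=
  ∀ Z₁ Z₂ : Finset (Fin 3 → k), Z₁ ⊆ X → Z₂ ⊆ X → Z₁.card = Z₂.card →
    ∀ i, hilbertFunction k Z₁ i = hilbertFunction k Z₂ i


open MvPolynomial

namespace Stmt19Aux

variable {k : Type} [Field k]

/-- Substitution `Xᵢ ↦ Xᵢ * t`, recording homogeneous components as coefficients. -/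
noncomputable def expandT (k : Type) [Field k] :
    MvPolynomial (Fin 3) k →+* Polynomial (MvPolynomial (Fin 3) k) :=
  eval₂Hom (Polynomial.C.comp C) (fun i => Polynomial.C (X i) * Polynomial.X)

lemma expandT_monomial (s : Fin 3 →₀ ℕ) (c : k) :
    expandT k (monomial s c) = Polynomial.C (monomial s c) * Polynomial.X ^ s.degree := by
  rw [expandT, eval₂Hom_monomial]
  have h1 : (s.prod fun i e => (Polynomial.C (X i : MvPolynomial (Fin 3) k) * Polynomial.X) ^ e)
      = Polynomial.C (s.prod fun i e => (X i : MvPolynomial (Fin 3) k) ^ e)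
        * Polynomial.X ^ s.degree := by
    rw [Finsupp.prod]
    simp_rw [mul_pow, ← Polynomial.C_pow]
    rw [Finset.prod_mul_distrib, ← map_prod, Finset.prod_pow_eq_pow_sum]
    rfl
  rw [h1, RingHom.comp_apply, ← mul_assoc, ← map_mul, ← monomial_eq]

lemma coeff_expandT (p : MvPolynomial (Fin 3) k) (j : ℕ) :
    (expandT k p).coeff j = homogeneousComponent j p := by
  induction p using MvPolynomial.induction_on' with
  | monomial s c =>
      rw [expandT_monomial, Polynomial.coeff_C_mul, Polynomial.coeff_X_pow,
        homogeneousComponent_of_mem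
          ((mem_homogeneousSubmodule _ _).mpr (isHomogeneous_monomial c rfl))]
      simp [mul_ite]
  | add p q hp hq => simp [map_add, hp, hq]

end Stmt19Aux

namespace Stmt19Aux

lemma isHomogeneous_of_components {k : Type} [Field k] (p : MvPolynomial (Fin 3) k) (r : ℕ)
    (h0 : ∀ j, j ≠ r → homogeneousComponent j p = 0) : p.IsHomogeneous r := by
  have hp : p = homogeneousComponent r p := by
    conv_lhs => rw [← sum_homogeneousComponent p]
    by_cases hr : r ∈ Finset.range (p.totalDegree + 1)
    · exact Finset.sum_eq_single_of_mem r hr (fun j _ hj => h0 j hj)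
    · rw [Finset.sum_eq_zero (fun j hj => h0 j (fun e => hr (e ▸ hj))),
        homogeneousComponent_eq_zero]
      simp only [Finset.mem_range] at hr
      omega
  rw [hp]
  exact homogeneousComponent_isHomogeneous r p

lemma factor_homogeneous {k : Type} [Field k] {f a b : MvPolynomial (Fin 3) k} {g : ℕ}
    (hf : f.IsHomogeneous g) (hf0 : f ≠ 0) (hab : f = a * b) :
    ∃ r s, r + s = g ∧ a.IsHomogeneous r ∧ b.IsHomogeneous s := by
  have hfX : expandT k f = Polynomial.C f * Polynomial.X ^ g := by
    ext j
    rw [coeff_expandT, Polynomial.coeff_C_mul, Polynomial.coeff_X_pow,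
      homogeneousComponent_of_mem ((mem_homogeneousSubmodule _ _).mpr hf)]
    simp [mul_ite]
  have hAB : expandT k a * expandT k b = Polynomial.C f * Polynomial.X ^ g := by
    rw [← map_mul, ← hab, hfX]
  have hCX : Polynomial.C f * Polynomial.X ^ g ≠ 0 :=
    mul_ne_zero (by simpa using hf0) (pow_ne_zero _ Polynomial.X_ne_zero)
  have hA : expandT k a ≠ 0 := left_ne_zero_of_mul (hAB ▸ hCX)
  have hB : expandT k b ≠ 0 := right_ne_zero_of_mul (hAB ▸ hCX)
  set A := expandT k a with hAdef
  set B := expandT k b with hBdef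
  have hnd : A.natDegree + B.natDegree = g := by
    rw [← Polynomial.natDegree_mul hA hB, hAB]
    simp [Polynomial.natDegree_C_mul_X_pow g f hf0]
  have hntd : A.natTrailingDegree + B.natTrailingDegree = g := by
    rw [← Polynomial.natTrailingDegree_mul hA hB, hAB]
    rw [Polynomial.natTrailingDegree_mul (by simp [hf0]) (by simp : (Polynomial.X ^ g : Polynomial (MvPolynomial (Fin 3) k)) ≠ 0)]
    simp
  have h1 := A.natTrailingDegree_le_natDegree
  have h2 := B.natTrailingDegree_le_natDegree
  have hAeq : A.natTrailingDegree = A.natDegree := by omega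
  have hBeq : B.natTrailingDegree = B.natDegree := by omega
  refine ⟨A.natDegree, B.natDegree, hnd, ?_, ?_⟩
  · refine isHomogeneous_of_components a _ (fun j hj => ?_)
    rw [← coeff_expandT, ← hAdef]
    rcases lt_or_gt_of_ne hj with hlt | hgt
    · exact Polynomial.coeff_eq_zero_of_lt_natTrailingDegree (by omega)
    · exact Polynomial.coeff_eq_zero_of_natDegree_lt hgt
  · refine isHomogeneous_of_components b _ (fun j hj => ?_)
    rw [← coeff_expandT, ← hBdef]
    rcases lt_or_gt_of_ne hj with hlt | hgt
    · exact Polynomial.coeff_eq_zero_of_lt_natTrailingDegree (by omega)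
    · exact Polynomial.coeff_eq_zero_of_natDegree_lt hgt

end Stmt19Aux

namespace Stmt19Aux

variable {k : Type} [Field k]

noncomputable def symEquiv (l : ℕ) : {d : Fin 3 →₀ ℕ // d.degree = l} ≃ Sym (Fin 3) l where
  toFun d := ⟨d.1.toMultiset, by
    rw [Finsupp.card_toMultiset]
    exact d.2⟩
  invFun m := ⟨m.1.toFinsupp, by
    have h := Finsupp.card_toMultiset (Multiset.toFinsupp m.1)
    rw [Multiset.toFinsupp_toMultiset] at h
    exact h.symm.trans m.2⟩
  left_inv d := by ext1; simp
  right_inv m := by ext1; simp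

noncomputable instance (l : ℕ) : Fintype {d : Fin 3 →₀ ℕ // d.degree = l} :=
  Fintype.ofEquiv _ (symEquiv l).symm

noncomputable def coeffMap (k : Type) [Field k] (l : ℕ) :
    (homogeneousSubmodule (Fin 3) k l) →ₗ[k] ({d : Fin 3 →₀ ℕ // d.degree = l} → k) where
  toFun p d := coeff d.1 p.1
  map_add' p q := by funext d; simp
  map_smul' c p := by funext d; simp

lemma coeffMap_injective (l : ℕ) : Function.Injective (coeffMap k l) := by
  rw [← LinearMap.ker_eq_bot, eq_bot_iff]
  rintro ⟨p, hp⟩ hker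
  have hz : ∀ d : Fin 3 →₀ ℕ, coeff d p = 0 := by
    intro d
    by_cases hd : d.degree = l
    · exact congrFun hker ⟨d, hd⟩
    · exact ((mem_homogeneousSubmodule _ _).mp hp).coeff_eq_zero hd
  simpa [Submodule.mem_bot, Subtype.ext_iff] using MvPolynomial.ext _ _ hz

instance (l : ℕ) : FiniteDimensional k (homogeneousSubmodule (Fin 3) k l) :=
  FiniteDimensional.of_injective (coeffMap k l) (coeffMap_injective l)

lemma finrank_hom_le (l : ℕ) :
    Module.finrank k (homogeneousSubmodule (Fin 3) k l) ≤ (l + 2).choose 2 := by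
  refine le_trans (LinearMap.finrank_le_finrank_of_injective (coeffMap_injective l)) ?_
  rw [Module.finrank_fintype_fun_eq_card]
  rw [Fintype.card_congr (symEquiv l), Sym.card_sym_eq_choose]
  have h1 : Fintype.card (Fin 3) + l - 1 = l + 2 := by
    simp; omega
  rw [h1]
  have h2 := Nat.choose_symm (by omega : 2 ≤ l + 2)
  have h3 : l + 2 - 2 = l := by omega
  rw [h3] at h2
  rw [h2]

end Stmt19Aux

namespace Stmt19Aux

variable {k : Type} [Field k]

lemma ker_mono {W W' : Finset (Fin 3 → k)} (h : W ⊆ W') (l : ℕ) :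
    LinearMap.ker (evalMapP2 k W' l) ≤ LinearMap.ker (evalMapP2 k W l) := by
  intro p hp
  rw [LinearMap.mem_ker] at hp ⊢
  funext x
  exact congrFun hp ⟨x.1, h x.2⟩

lemma eval_vanish_iff_mem_ker (W : Finset (Fin 3 → k)) (l : ℕ)
    (p : homogeneousSubmodule (Fin 3) k l) :
    p ∈ LinearMap.ker (evalMapP2 k W l) ↔ ∀ x ∈ W, eval x p.1 = 0 := by
  rw [LinearMap.mem_ker]
  constructor
  · intro hp x hx
    exact congrFun hp ⟨x, hx⟩
  · intro hp
    funext x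
    exact hp x.1 x.2

lemma rank_nullity (W : Finset (Fin 3 → k)) (l : ℕ) :
    hilbertFunction k W l
      + Module.finrank k (LinearMap.ker (evalMapP2 k W l))
      = Module.finrank k (homogeneousSubmodule (Fin 3) k l) :=
  LinearMap.finrank_range_add_finrank_ker (evalMapP2 k W l)

/-- Key lemma: under uniform position and minimality of `g`, a nonzero form of degree `r < g`
vanishes on fewer than `finrank (forms of degree r)` points of `X`. -/
lemma key (X : Finset (Fin 3 → k)) (hupp : UniformPosition k X) (g : ℕ)
    (hmin : ∀ r, r < g → ∀ p ∈ homogeneousSubmodule (Fin 3) k r, p ≠ 0 →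
      ¬(∀ x ∈ X, eval x p = 0))
    {r : ℕ} (hr : r < g) (Z : Finset (Fin 3 → k)) (hZX : Z ⊆ X)
    (p : MvPolynomial (Fin 3) k) (hpm : p ∈ homogeneousSubmodule (Fin 3) k r) (hp0 : p ≠ 0)
    (hvan : ∀ x ∈ Z, eval x p = 0) :
    Z.card < Module.finrank k (homogeneousSubmodule (Fin 3) k r) := by
  classical
  by_contra hcon
  push_neg at hcon
  set m := Module.finrank k (homogeneousSubmodule (Fin 3) k r) with hm
  have step : ∀ n : ℕ, ∃ W, W ⊆ X ∧ W.card ≤ n ∧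
      Module.finrank k (LinearMap.ker (evalMapP2 k W r)) ≤ m - n := by
    intro n
    induction n with
    | zero =>
        exact ⟨∅, Finset.empty_subset _, by simp, by simpa using Submodule.finrank_le _⟩
    | succ n ih =>
        obtain ⟨W, hWX, hWc, hWk⟩ := ih
        by_cases hbot : LinearMap.ker (evalMapP2 k W r) = ⊥
        · exact ⟨W, hWX, hWc.trans (Nat.le_succ n), by rw [hbot]; simp⟩
        · obtain ⟨q, hqker, hq0⟩ := Submodule.exists_mem_ne_zero_of_ne_bot hbot
          have hq1 : (q : MvPolynomial (Fin 3) k) ≠ 0 := by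
            simpa using hq0
          have hnv := hmin r hr q.1 q.2 hq1
          push_neg at hnv
          obtain ⟨x, hxX, hx0⟩ := hnv
          refine ⟨insert x W, Finset.insert_subset hxX hWX,
            (Finset.card_insert_le _ _).trans (by omega), ?_⟩
          have hlt : LinearMap.ker (evalMapP2 k (insert x W) r)
              < LinearMap.ker (evalMapP2 k W r) := by
            refine lt_of_le_of_ne (ker_mono (Finset.subset_insert x W) r) (fun e => hx0 ?_)
            have hmem : q ∈ LinearMap.ker (evalMapP2 k (insert x W) r) := e ▸ hqker
            exact (eval_vanish_iff_mem_ker _ _ _).mp hmem x (Finset.mem_insert_self x W)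
          have := Submodule.finrank_lt_finrank_of_lt hlt
          omega
  obtain ⟨W, hWX, hWc, hWk⟩ := step m
  have hkerW : LinearMap.ker (evalMapP2 k W r) = ⊥ :=
    Submodule.finrank_eq_zero.mp (by omega)
  have hmX : m ≤ X.card := le_trans hcon (Finset.card_le_card hZX)
  obtain ⟨W', hWW', hW'X, hW'card⟩ :=
    Finset.exists_subsuperset_card_eq hWX hWc hmX
  have hkerW' : LinearMap.ker (evalMapP2 k W' r) = ⊥ :=
    le_bot_iff.mp (hkerW ▸ ker_mono hWW' r)
  obtain ⟨Z', hZ'Z, hZ'c⟩ := Finset.exists_subset_card_eq hcon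
  have hH := hupp Z' W' (hZ'Z.trans hZX) hW'X (by rw [hZ'c, hW'card]) r
  have h1 := rank_nullity (k := k) W' r
  have h2 := rank_nullity (k := k) Z' r
  rw [hkerW'] at h1
  simp only [finrank_bot] at h1
  have hker3 : Module.finrank k (LinearMap.ker (evalMapP2 k Z' r)) ≠ 0 := by
    rw [ne_eq, Submodule.finrank_eq_zero]
    intro hbot
    have hmem : (⟨p, hpm⟩ : homogeneousSubmodule (Fin 3) k r) ∈
        LinearMap.ker (evalMapP2 k Z' r) :=
      (eval_vanish_iff_mem_ker _ _ _).mpr (fun x hx => hvan x (hZ'Z hx))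
    rw [hbot, Submodule.mem_bot] at hmem
    exact hp0 (by simpa [Subtype.ext_iff] using hmem)
  omega

lemma choose_two_succ (n : ℕ) : (n + 2).choose 2 = (n + 1).choose 2 + (n + 1) := by
  rw [Nat.choose_succ_succ (n + 1) 1, Nat.choose_one_right, Nat.add_comm]

lemma tri_bound : ∀ r : ℕ, ∀ s : ℕ, 1 ≤ r → 1 ≤ s →
    (r + 2).choose 2 + (s + 2).choose 2 ≤ (r + s + 1).choose 2 + 3 := by
  intro r
  induction r with
  | zero => omega
  | succ r ih =>
      intro s hr hs
      by_cases h1 : r = 0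
      · subst h1
        have e4 : 0 + 1 + s + 1 = s + 2 := by omega
        rw [e4]
        have e5 : ((0:ℕ) + 1 + 2).choose 2 = 3 := rfl
        omega
      · have e1 := choose_two_succ (r + 1)
        rw [(by omega : r + 1 + 1 = r + 2)] at e1
        have e2 := choose_two_succ (r + s)
        have e3 := ih s (by omega) hs
        have e4 : r + 1 + 2 = r + 1 + 2 := rfl
        have e5 : r + 1 + s + 1 = r + s + 2 := by omega
        rw [e5]
        omega

end Stmt19Aux

open MvPolynomial in
/-- Let `X ⊆ ℙ²` be a set of `n = C(d+2,2) + h` points, `0 ≤ h ≤ d+1`, in uniform position, and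
let `g` be the least degree of a curve containing `X`. If `g ≤ d`, or `g = d+1` and `h ≥ 2`,
then every curve of degree `g` containing `X` is irreducible. -/
theorem stmt19 (k : Type) [Field k] [IsAlgClosed k] (X : Finset (Fin 3 → k)) (d h g : ℕ)
    (hdist : ProjDistinct k X) (hupp : UniformPosition k X)
    (hcard : X.card = (d + 2).choose 2 + h) (hh : h ≤ d + 1)
    (hg : IsLeast {i : ℕ | ∃ f ∈ homogeneousSubmodule (Fin 3) k i, f ≠ 0 ∧
      ∀ x ∈ X, eval x f = 0} g)
    (hcase : g ≤ d ∨ (g = d + 1 ∧ 2 ≤ h)) :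
    ∀ f ∈ homogeneousSubmodule (Fin 3) k g, f ≠ 0 → (∀ x ∈ X, eval x f = 0) →
      Irreducible f := by
  classical
  intro f hfm hf0 hfvan
  have hXpos : 0 < X.card := by
    rw [hcard]
    have := Nat.choose_pos (show 2 ≤ d + 2 by omega)
    omega
  obtain ⟨x0, hx0⟩ := Finset.card_pos.mp hXpos
  constructor
  · -- not a unit
    intro hu
    have := hu.map (eval x0)
    rw [hfvan x0 hx0] at this
    exact not_isUnit_zero this
  · intro a b hab
    by_contra hcon
    push_neg at hcon
    obtain ⟨hua, hub⟩ := hcon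
    have ha0 : a ≠ 0 := fun e => hf0 (by rw [hab, e, zero_mul])
    have hb0 : b ≠ 0 := fun e => hf0 (by rw [hab, e, mul_zero])
    obtain ⟨r, s, hrs, har, hbs⟩ :=
      Stmt19Aux.factor_homogeneous ((mem_homogeneousSubmodule _ _).mp hfm) hf0 hab
    -- factors of degree 0 are units
    have hdeg_unit : ∀ (c : MvPolynomial (Fin 3) k), c ≠ 0 → c.IsHomogeneous 0 → IsUnit c := by
      intro c hc0 hch
      have hcC : c = C (coeff 0 c) := by
        have h1 := homogeneousComponent_of_mem ((mem_homogeneousSubmodule _ _).mpr hch)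
          (m := 0)
        rw [if_pos rfl] at h1
        exact h1.symm.trans (homogeneousComponent_zero c)
      have hc0' : coeff 0 c ≠ 0 := fun e => hc0 (by rw [hcC, e, map_zero])
      refine IsUnit.of_mul_eq_one (a := c) (C (coeff 0 c)⁻¹) ?_
      nth_rewrite 1 [hcC]
      rw [← map_mul, mul_inv_cancel₀ hc0', map_one]
    have hr1 : 1 ≤ r := by
      rcases Nat.eq_zero_or_pos r with h | h
      · exact absurd (hdeg_unit a ha0 (h ▸ har)) hua
      · exact h
    have hs1 : 1 ≤ s := by
      rcases Nat.eq_zero_or_pos s with h | h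
      · exact absurd (hdeg_unit b hb0 (h ▸ hbs)) hub
      · exact h
    have hrg : r < g := by omega
    have hsg : s < g := by omega
    have hmin : ∀ r', r' < g → ∀ p ∈ homogeneousSubmodule (Fin 3) k r', p ≠ 0 →
        ¬(∀ x ∈ X, eval x p = 0) := by
      intro r' hr' p hpm hp0 hv
      exact absurd (hg.2 ⟨p, hpm, hp0, hv⟩) (by omega)
    set X1 := X.filter (fun x => eval x a = 0) with hX1
    set X2 := X.filter (fun x => eval x b = 0) with hX2
    have hsplit : X ⊆ X1 ∪ X2 := by
      intro x hx
      have hev := hfvan x hx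
      rw [hab, map_mul] at hev
      rcases mul_eq_zero.mp hev with hc | hc
      · exact Finset.mem_union_left _ (Finset.mem_filter.mpr ⟨hx, hc⟩)
      · exact Finset.mem_union_right _ (Finset.mem_filter.mpr ⟨hx, hc⟩)
    have h1 : X1.card < Module.finrank k (homogeneousSubmodule (Fin 3) k r) :=
      Stmt19Aux.key X hupp g hmin hrg X1 (Finset.filter_subset _ _) a
        ((mem_homogeneousSubmodule _ _).mpr har) ha0
        (fun x hx => (Finset.mem_filter.mp hx).2)
    have h2 : X2.card < Module.finrank k (homogeneousSubmodule (Fin 3) k s) :=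
      Stmt19Aux.key X hupp g hmin hsg X2 (Finset.filter_subset _ _) b
        ((mem_homogeneousSubmodule _ _).mpr hbs) hb0
        (fun x hx => (Finset.mem_filter.mp hx).2)
    have hb1 := Stmt19Aux.finrank_hom_le (k := k) r
    have hb2 := Stmt19Aux.finrank_hom_le (k := k) s
    have hcount : X.card ≤ X1.card + X2.card :=
      (Finset.card_le_card hsplit).trans (Finset.card_union_le _ _)
    have htri := Stmt19Aux.tri_bound r s hr1 hs1
    have hd2 := Stmt19Aux.choose_two_succ d
    rcases hcase with hgd | ⟨hgd, hh2⟩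
    · have hmono : (r + s + 1).choose 2 ≤ (d + 1).choose 2 :=
        Nat.choose_le_choose 2 (by omega)
      omega
    · have e : r + s + 1 = d + 2 := by omega
      rw [e] at htri
      omega
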